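/- arXiv:1603.02562 — 8 statements merged into one kernel-verified Lean document; each statement's English description precedes it below -/
import Mathlib

section
/- If V is an n-dimensional vector space over a finite field with q elements, then the non-zero component graph Γ(V) has exactly q^n − 1 vertices and (q^{2n} − q^n + 1 − (2q−1)^n)/2 edges. -/
/-- `W` is a resolving set of `G`: distinct vertices have distinct distance vectors to `W`. -/
def Resolves {α : Type*} (G : SimpleGraph α) (W : Set α) : Prop :=
  ∀ u v : α, (∀ w ∈ W, G.dist u w = G.dist v w) → u = v

/-- The metric dimension of `G`: minimum cardinality of a resolving set. -/
noncomputable def metricDim {α : Type*} (G : SimpleGraph α) : ℕ :=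
  sInf {k | ∃ W : Set α, W.ncard = k ∧ Resolves G W}

/-- A minimal resolving set: no proper subset resolves. -/
def MinimalResolves {α : Type*} (G : SimpleGraph α) (W : Set α) : Prop :=
  Resolves G W ∧ ∀ W' ⊂ W, ¬ Resolves G W'

/-- The exchange property for minimal resolving sets. -/
def ExchangeProperty {α : Type*} (G : SimpleGraph α) : Prop :=
  ∀ W₁ W₂ : Set α, MinimalResolves G W₁ → MinimalResolves G W₂ →
    ∀ r ∈ W₁, ∃ s ∈ W₂, MinimalResolves G (insert r (W₂ \ {s}))

/-- `u` and `v` are twins: equal open neighborhoods or equal closed neighborhoods. -/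
def Twins {α : Type*} (G : SimpleGraph α) (u v : α) : Prop :=
  G.neighborSet u = G.neighborSet v ∨
    insert u (G.neighborSet u) = insert v (G.neighborSet v)

/-- The non-zero component graph of `Fin n → F` with respect to the standard basis:
vertices are the non-zero vectors, adjacency means the supports (skeletons) intersect. -/
def NZCGraph (F : Type*) [Field F] (n : ℕ) :
    SimpleGraph {v : Fin n → F // v ≠ 0} where
  Adj u v := u ≠ v ∧ ∃ i, (u : Fin n → F) i ≠ 0 ∧ (v : Fin n → F) i ≠ 0
  symm := by
    constructor
    rintro u v ⟨h, i, hu, hv⟩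
    exact ⟨h.symm, i, hv, hu⟩
  loopless := by constructor; rintro u ⟨h, _⟩; exact h rfl

open Finset

def dartEquivAux {V : Type*} (G : SimpleGraph V) : G.Dart ≃ {p : V × V // G.Adj p.1 p.2} where
  toFun d := ⟨d.toProd, d.adj⟩
  invFun p := ⟨p.1, p.2⟩
  left_inv d := rfl
  right_inv p := rfl

def nzcDartEquiv (F : Type*) [Field F] (n : ℕ) :
    {p : ({v : Fin n → F // v ≠ 0} × {v : Fin n → F // v ≠ 0}) // (NZCGraph F n).Adj p.1 p.2} ≃
    {p : (Fin n → F) × (Fin n → F) // p.1 ≠ p.2 ∧ ∃ i, p.1 i ≠ 0 ∧ p.2 i ≠ 0} where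
  toFun p := ⟨(p.1.1.1, p.1.2.1), by
    obtain ⟨hne, i, h1, h2⟩ := p.2
    exact ⟨fun h => hne (Subtype.ext h), i, h1, h2⟩⟩
  invFun p := ⟨(⟨p.1.1, fun h => by obtain ⟨_, i, h1, _⟩ := p.2; exact h1 (by simp [h])⟩,
               ⟨p.1.2, fun h => by obtain ⟨_, i, _, h2⟩ := p.2; exact h2 (by simp [h])⟩),
    fun h => p.2.1 (congrArg Subtype.val h), p.2.2⟩
  left_inv p := rfl
  right_inv p := rfl

theorem stmt0 (q n : ℕ) (F : Type*) [Field F] [Fintype F] (hq : Fintype.card F = q) :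
    Nat.card {v : Fin n → F // v ≠ 0} = q ^ n - 1 ∧
    (NZCGraph F n).edgeSet.ncard = (q ^ (2 * n) - q ^ n + 1 - (2 * q - 1) ^ n) / 2 := by
  classical
  subst hq
  set q := Fintype.card F with hqdef
  have hq2 : 2 ≤ q := Fintype.one_lt_card
  have hcardW : Fintype.card (Fin n → F) = q ^ n := by simp; rfl
  constructor
  · rw [Nat.card_eq_fintype_card]
    have h := Fintype.card_subtype_compl (fun v : Fin n → F => v = 0)
    rw [Fintype.card_subtype_eq, hcardW] at h
    exact h
  -- edge count
  set W := Fin n → F with hW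
  set D := (univ : Finset (W × W)).filter (fun p => p.1 = p.2) with hDdef
  set A := (univ : Finset (W × W)).filter (fun p => ∀ i, p.1 i = 0 ∨ p.2 i = 0) with hAdef
  set T := (univ : Finset (W × W)).filter (fun p => p.1 ≠ p.2 ∧ ∃ i, p.1 i ≠ 0 ∧ p.2 i ≠ 0) with hTdef
  have hUnivCard : (univ : Finset (W × W)).card = q ^ (2 * n) := by
    rw [card_univ, Fintype.card_prod, hcardW, two_mul, pow_add]
  have hD : D.card = q ^ n := by
    have : D = Finset.diag univ := by
      ext p; simp [hDdef, Finset.mem_diag]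
    rw [this, Finset.diag_card, card_univ, hcardW]
  have hS : Fintype.card {b : F × F // b.1 = 0 ∨ b.2 = 0} = 2 * q - 1 := by
    rw [Fintype.card_subtype]
    have h1 : (univ : Finset (F × F)).filter (fun b => b.1 = 0) = ({0} : Finset F) ×ˢ univ := by
      ext b; rw [Finset.mem_filter, Finset.mem_product]; simp
    have h2 : (univ : Finset (F × F)).filter (fun b => b.2 = 0) = (univ : Finset F) ×ˢ {0} := by
      ext b; rw [Finset.mem_filter, Finset.mem_product]; simp
    have h3 : (univ : Finset (F × F)).filter (fun b => b.1 = 0 ∧ b.2 = 0) = {((0 : F), (0 : F))} := by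
      ext b; simp [Prod.ext_iff]
    have key := Finset.card_union_add_card_inter
      ((univ : Finset (F × F)).filter (fun b => b.1 = 0))
      ((univ : Finset (F × F)).filter (fun b => b.2 = 0))
    rw [← Finset.filter_or, ← Finset.filter_and, h1, h2, h3] at key
    simp [Finset.card_product] at key
    omega
  have hA : A.card = (2 * q - 1) ^ n := by
    rw [hAdef, ← Fintype.card_subtype]
    have e1 : {p : W × W // ∀ i, p.1 i = 0 ∨ p.2 i = 0} ≃
        {f : Fin n → F × F // ∀ i, (f i).1 = 0 ∨ (f i).2 = 0} :=
      ((Equiv.arrowProdEquivProdArrow (Fin n) (fun _ => F) (fun _ => F)).subtypeEquiv (fun f => Iff.rfl)).symm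
    rw [Fintype.card_congr (e1.trans (Equiv.subtypePiEquivPi (β := fun _ : Fin n => F × F) (p := fun _ b => b.1 = 0 ∨ b.2 = 0)))]
    simp [hS]
  have hDA : D ∩ A = {((0 : W), (0 : W))} := by
    ext p
    simp only [hDdef, hAdef, Finset.mem_inter, Finset.mem_filter, Finset.mem_univ, true_and,
      Finset.mem_singleton, Prod.ext_iff]
    constructor
    · rintro ⟨h, hall⟩
      have h1 : p.1 = 0 := by
        funext i
        rcases hall i with hi | hi
        · exact hi
        · rw [h]; exact hi
      exact ⟨h1, h ▸ h1⟩
    · rintro ⟨h1, h2⟩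
      rw [h1, h2]
      exact ⟨rfl, fun i => Or.inl rfl⟩
  have hUnion : (D ∪ A).card + 1 = q ^ n + (2 * q - 1) ^ n := by
    have := Finset.card_union_add_card_inter D A
    rw [hDA] at this
    simpa [hD, hA] using this
  have hT : T = univ \ (D ∪ A) := by
    ext p
    simp only [hTdef, hDdef, hAdef, Finset.mem_filter, Finset.mem_sdiff, Finset.mem_univ,
      true_and, Finset.mem_union, not_or, not_forall]
  have hTcard : T.card = q ^ (2 * n) - (D ∪ A).card := by
    rw [hT, Finset.card_sdiff_of_subset (Finset.subset_univ _), hUnivCard]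
  have hUle : (D ∪ A).card ≤ q ^ (2 * n) := by
    rw [← hUnivCard]; exact Finset.card_le_univ _
  -- dart count
  have hDart : Fintype.card (NZCGraph F n).Dart = T.card := by
    rw [hTdef, ← Fintype.card_subtype]
    exact Fintype.card_congr ((dartEquivAux _).trans (nzcDartEquiv F n))
  have h2E : Fintype.card (NZCGraph F n).Dart = 2 * (NZCGraph F n).edgeFinset.card :=
    SimpleGraph.dart_card_eq_twice_card_edges _
  have hncard : (NZCGraph F n).edgeSet.ncard = (NZCGraph F n).edgeFinset.card := by
    rw [← Nat.card_coe_set_eq, Nat.card_eq_fintype_card, SimpleGraph.edgeFinset_card]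
  have ha : 1 ≤ q ^ n := Nat.one_le_pow _ _ (by omega)
  have hc : 1 ≤ (2 * q - 1) ^ n := Nat.one_le_pow _ _ (by omega)
  rw [hncard]
  omega
end

section
/- The non-zero component graph Γ(V) is a complete graph if and only if V is a 1-dimensional vector space. -/
theorem stmt1 (n : ℕ) (hn : 0 < n) (F : Type*) [Field F] [Fintype F] :
    NZCGraph F n = ⊤ ↔ n = 1 := by
  constructor
  · intro h
    by_contra hne
    have h2 : 2 ≤ n := by omega
    set i0 : Fin n := ⟨0, by omega⟩
    set i1 : Fin n := ⟨1, by omega⟩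
    have hne01 : i0 ≠ i1 := by simp [i0, i1, Fin.ext_iff]
    have hu : (Pi.single i0 1 : Fin n → F) ≠ 0 := by
      intro hc
      have := congrFun hc i0
      simp at this
    have hv : (Pi.single i1 1 : Fin n → F) ≠ 0 := by
      intro hc
      have := congrFun hc i1
      simp at this
    set u : {v : Fin n → F // v ≠ 0} := ⟨Pi.single i0 1, hu⟩
    set v : {v : Fin n → F // v ≠ 0} := ⟨Pi.single i1 1, hv⟩
    have huv : u ≠ v := by
      intro hc
      have : (u : Fin n → F) i0 = (v : Fin n → F) i0 := by rw [hc]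
      simp [u, v, Pi.single_eq_of_ne hne01] at this
    have hadj : (NZCGraph F n).Adj u v := h ▸ (by simpa using huv)
    obtain ⟨-, i, hi0, hi1⟩ := hadj
    have : i = i0 := by
      by_contra hc
      exact hi0 (Pi.single_eq_of_ne hc 1)
    have : i = i1 := by
      by_contra hc
      exact hi1 (Pi.single_eq_of_ne hc 1)
    exact hne01 (by omega)
  · intro h
    subst h
    ext u v
    simp only [SimpleGraph.top_adj, NZCGraph]
    constructor
    · exact fun ⟨h, _⟩ => h
    · intro huv
      refine ⟨huv, 0, ?_, ?_⟩
      · intro hc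
        apply u.2
        funext j
        have : j = 0 := Subsingleton.elim j 0
        rw [this]; exact hc
      · intro hc
        apply v.2
        funext j
        have : j = 0 := Subsingleton.elim j 0
        rw [this]; exact hc
end

section
/- If u and v are twins in a connected graph Γ, W is a resolving set with u ∈ W and v ∉ W, then (W \ {u}) ∪ {v} is also a resolving set of Γ. -/
/-- From twins: adjacency to any third vertex is symmetric in `u`, `v`. -/
lemma twins_adj_iff {α : Type*} {G : SimpleGraph α} {u v : α}
    (h : Twins G u v) {z : α} (hzu : z ≠ u) (hzv : z ≠ v) :
    G.Adj u z ↔ G.Adj v z := by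
  rcases h with h | h
  · constructor <;> intro ha
    · exact (show z ∈ G.neighborSet v from h ▸ ha)
    · exact (show z ∈ G.neighborSet u from h.symm ▸ ha)
  · constructor <;> intro ha
    · have : z ∈ insert v (G.neighborSet v) := h ▸ (Set.mem_insert_of_mem _ ha)
      rcases this with h' | h'
      · exact absurd h' hzv
      · exact h'
    · have : z ∈ insert u (G.neighborSet u) := h.symm ▸ (Set.mem_insert_of_mem _ ha)
      rcases this with h' | h'
      · exact absurd h' hzu
      · exact h'

/-- Swapping twins preserves adjacency (one direction suffices). -/
lemma twins_swap_adj {α : Type*} [DecidableEq α] {G : SimpleGraph α} {u v : α} (huv : u ≠ v)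
    (h : Twins G u v) (a b : α) (hab : G.Adj a b) :
    G.Adj (Equiv.swap u v a) (Equiv.swap u v b) := by
  by_cases hau : a = u
  · rw [hau, Equiv.swap_apply_left]
    by_cases hbv : b = v
    · rw [hbv, Equiv.swap_apply_right]
      exact (hau ▸ hbv ▸ hab).symm
    · have hbu : b ≠ u := fun e => hab.ne (hau.trans e.symm)
      rw [Equiv.swap_apply_of_ne_of_ne hbu hbv]
      exact (twins_adj_iff h hbu hbv).mp (hau ▸ hab)
  · by_cases hav : a = v
    · rw [hav, Equiv.swap_apply_right]
      by_cases hbu : b = u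
      · rw [hbu, Equiv.swap_apply_left]
        exact (hav ▸ hbu ▸ hab).symm
      · have hbv : b ≠ v := fun e => hab.ne (hav.trans e.symm)
        rw [Equiv.swap_apply_of_ne_of_ne hbu hbv]
        exact (twins_adj_iff h hbu hbv).mpr (hav ▸ hab)
    · rw [Equiv.swap_apply_of_ne_of_ne hau hav]
      by_cases hbu : b = u
      · rw [hbu, Equiv.swap_apply_left]
        exact ((twins_adj_iff h hau hav).mp (hbu ▸ hab).symm).symm
      · by_cases hbv : b = v
        · rw [hbv, Equiv.swap_apply_right]
          exact ((twins_adj_iff h hau hav).mpr (hbv ▸ hab).symm).symm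
        · rw [Equiv.swap_apply_of_ne_of_ne hbu hbv]
          exact hab

/-- Swapping twins is a graph automorphism. -/
def twinsIso {α : Type*} [DecidableEq α] {G : SimpleGraph α} {u v : α} (huv : u ≠ v)
    (h : Twins G u v) : G ≃g G where
  toEquiv := Equiv.swap u v
  map_rel_iff' := by
    intro a b
    constructor
    · intro hab
      have := twins_swap_adj huv h _ _ hab
      simpa using this
    · exact twins_swap_adj huv h a b

lemma iso_dist_le {α : Type*} {G : SimpleGraph α} (hG : G.Connected) (σ : G ≃g G)
    (a b : α) : G.dist (σ a) (σ b) ≤ G.dist a b := by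
  obtain ⟨p, hp⟩ := hG.exists_walk_length_eq_dist a b
  calc G.dist (σ a) (σ b) ≤ (p.map σ.toHom).length := SimpleGraph.dist_le _
    _ = p.length := SimpleGraph.Walk.length_map _ _
    _ = G.dist a b := hp

lemma iso_dist {α : Type*} {G : SimpleGraph α} (hG : G.Connected) (σ : G ≃g G)
    (a b : α) : G.dist (σ a) (σ b) = G.dist a b := by
  refine le_antisymm (iso_dist_le hG σ a b) ?_
  have := iso_dist_le hG σ.symm (σ a) (σ b)
  simpa using this

theorem stmt3 {α : Type*} (G : SimpleGraph α) (hG : G.Connected) (u v : α) (huv : u ≠ v)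
    (h : Twins G u v) (W : Set α) (hW : Resolves G W) (hu : u ∈ W) (hv : v ∉ W) :
    Resolves G (insert v (W \ {u})) := by
  classical
  intro x y hxy
  set σ : G ≃g G := twinsIso huv h with hσ
  have happ : ∀ z : α, (σ : α → α) z = Equiv.swap u v z := fun z => rfl
  have hinv : ∀ z : α, (σ : α → α) ((σ : α → α) z) = z := by
    intro z; rw [happ, happ, Equiv.swap_apply_self]
  have hσw' : ∀ z w : α, G.dist ((σ : α → α) z) w = G.dist z ((σ : α → α) w) := by
    intro z w
    conv_lhs => rw [show w = (σ : α → α) ((σ : α → α) w) from (hinv w).symm]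
    exact iso_dist hG σ z ((σ : α → α) w)
  have key : ∀ w ∈ W, G.dist ((σ : α → α) x) w = G.dist ((σ : α → α) y) w := by
    intro w hw
    have hwv : w ≠ v := fun e => hv (e ▸ hw)
    rw [hσw' x, hσw' y]
    by_cases hwu : w = u
    · subst hwu
      rw [show (σ : α → α) w = v from by rw [happ, Equiv.swap_apply_left]]
      exact hxy v (Set.mem_insert _ _)
    · rw [show (σ : α → α) w = w from by rw [happ, Equiv.swap_apply_of_ne_of_ne hwu hwv]]
      exact hxy w (Set.mem_insert_of_mem _ ⟨hw, hwu⟩)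
  have := hW _ _ key
  exact σ.toEquiv.injective this
end

section
/- If q = 2 and n ≥ 3, then the metric dimension of the non-zero component graph Γ(V) is n. -/
namespace NZCAux

variable {n : ℕ}

abbrev V (n : ℕ) := {v : Fin n → ZMod 2 // v ≠ 0}

lemma exists_ne (u : V n) : ∃ i, (u : Fin n → ZMod 2) i ≠ 0 := by
  by_contra h
  push_neg at h
  exact u.2 (funext fun i => h i)

lemma dist_eq_one {u w : V n} (hne : u ≠ w)
    (h : ∃ i, (u : Fin n → ZMod 2) i ≠ 0 ∧ (w : Fin n → ZMod 2) i ≠ 0) :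
    (NZCGraph (ZMod 2) n).dist u w = 1 :=
  SimpleGraph.dist_eq_one_iff_adj.mpr ⟨hne, h⟩

lemma dist_eq_two {u w : V n} (hne : u ≠ w)
    (h : ¬ ∃ i, (u : Fin n → ZMod 2) i ≠ 0 ∧ (w : Fin n → ZMod 2) i ≠ 0) :
    (NZCGraph (ZMod 2) n).dist u w = 2 := by
  have hn1 : n ≠ 0 := by
    rcases exists_ne u with ⟨i, _⟩
    exact fun h0 => absurd (h0 ▸ i).isLt (by omega)
  set t : V n := ⟨fun _ => 1, by
    intro h0
    have := congrFun h0 ⟨0, Nat.pos_of_ne_zero hn1⟩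
    exact one_ne_zero this⟩ with ht
  have htu : t ≠ u := by
    intro he
    rcases exists_ne w with ⟨j, hj⟩
    exact h ⟨j, by rw [← he]; exact one_ne_zero, hj⟩
  have htw : t ≠ w := by
    intro he
    rcases exists_ne u with ⟨j, hj⟩
    exact h ⟨j, hj, by rw [← he]; exact one_ne_zero⟩
  have a1 : (NZCGraph (ZMod 2) n).Adj u t := by
    rcases exists_ne u with ⟨j, hj⟩
    exact ⟨htu.symm, j, hj, one_ne_zero⟩
  have a2 : (NZCGraph (ZMod 2) n).Adj t w := by
    rcases exists_ne w with ⟨j, hj⟩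
    exact ⟨htw, j, one_ne_zero, hj⟩
  have hwalk : (NZCGraph (ZMod 2) n).dist u w ≤ 2 := by
    have := SimpleGraph.dist_le (SimpleGraph.Walk.cons a1 (SimpleGraph.Walk.cons a2 .nil))
    simpa using this
  have hreach : (NZCGraph (ZMod 2) n).Reachable u w :=
    ⟨SimpleGraph.Walk.cons a1 (SimpleGraph.Walk.cons a2 .nil)⟩
  have h0 : (NZCGraph (ZMod 2) n).dist u w ≠ 0 := by
    intro hz
    rcases SimpleGraph.dist_eq_zero_iff_eq_or_not_reachable.mp hz with h' | h'
    · exact hne h'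
    · exact h' hreach
  have h1 : (NZCGraph (ZMod 2) n).dist u w ≠ 1 := by
    intro hz
    exact h (SimpleGraph.dist_eq_one_iff_adj.mp hz).2
  omega

/-- standard basis vertex -/
def e (i : Fin n) : V n :=
  ⟨Pi.single i 1, by
    intro h0
    have := congrFun h0 i
    rw [Pi.single_eq_same] at this
    exact one_ne_zero this⟩

lemma e_inj : Function.Injective (e (n := n)) := by
  intro i j hij
  by_contra hne
  have h := congrFun (congrArg Subtype.val hij) i
  simp only [e, Pi.single_eq_same, Pi.single_eq_of_ne hne] at h
  exact one_ne_zero h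

lemma key {u v : V n} {i : Fin n} (hu : (u : Fin n → ZMod 2) i ≠ 0)
    (hv : (v : Fin n → ZMod 2) i = 0) :
    (NZCGraph (ZMod 2) n).dist u (e i) ≠ (NZCGraph (ZMod 2) n).dist v (e i) := by
  have hv2 : (NZCGraph (ZMod 2) n).dist v (e i) = 2 := by
    apply dist_eq_two
    · intro he
      rw [he] at hv
      simp only [e, Pi.single_eq_same] at hv
      exact one_ne_zero hv
    · rintro ⟨j, hj1, hj2⟩
      rcases eq_or_ne j i with rfl | hji
      · exact hj1 hv
      · exact hj2 (Pi.single_eq_of_ne hji 1)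
  have hu2 : (NZCGraph (ZMod 2) n).dist u (e i) ≤ 1 := by
    rcases eq_or_ne u (e i) with rfl | hne
    · simp [SimpleGraph.dist_self]
    · exact le_of_eq (dist_eq_one hne ⟨i, hu, by simp [e, Pi.single_eq_same]⟩)
  omega

lemma lt_two_pow_pred : ∀ m : ℕ, 3 ≤ m → m < 2 ^ (m - 1) := by
  intro m
  induction m with
  | zero => omega
  | succ k ih =>
    intro hk
    rcases Nat.lt_or_ge k 3 with hm | hm
    · interval_cases k <;> simp_all
    · have h1 := ih hm
      have h2 : 2 ^ (k - 1) * 2 = 2 ^ k := by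
        rw [← pow_succ]
        congr 1
        omega
      simp only [Nat.add_sub_cancel]
      omega

end NZCAux

open NZCAux in
theorem stmt7 (n : ℕ) (hn : 3 ≤ n) : metricDim (NZCGraph (ZMod 2) n) = n := by
  have hzm : ∀ x : ZMod 2, x = 0 ∨ x = 1 := by decide
  -- upper bound: the standard basis resolves
  have hmem : n ∈ {k | ∃ W : Set (V n), W.ncard = k ∧ Resolves (NZCGraph (ZMod 2) n) W} := by
    refine ⟨Set.range e, ?_, ?_⟩
    · rw [← Set.image_univ, Set.ncard_image_of_injective _ e_inj, Set.ncard_univ]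
      simp
    · intro u v hdist
      by_contra hne
      have : (u : Fin n → ZMod 2) ≠ (v : Fin n → ZMod 2) := fun h => hne (Subtype.ext h)
      rcases Function.ne_iff.mp this with ⟨i, hi⟩
      have hd := hdist (e i) ⟨i, rfl⟩
      rcases hzm ((u : Fin n → ZMod 2) i) with hu0 | hu1
      · rcases hzm ((v : Fin n → ZMod 2) i) with hv0 | hv1
        · exact hi (hu0.trans hv0.symm)
        · exact key (hv1 ▸ one_ne_zero) hu0 hd.symm
      · rcases hzm ((v : Fin n → ZMod 2) i) with hv0 | hv1
        · exact key (hu1 ▸ one_ne_zero) hv0 hd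
        · exact hi (hu1.trans hv1.symm)
  -- lower bound: every resolving set has size ≥ n
  have hlb : ∀ k ∈ {k | ∃ W : Set (V n), W.ncard = k ∧ Resolves (NZCGraph (ZMod 2) n) W},
      n ≤ k := by
    rintro k ⟨W, hWk, hWres⟩
    by_contra hlt
    push_neg at hlt
    have hWfin : W.Finite := Set.toFinite W
    classical
    let Wf : Finset (V n) := hWfin.toFinset
    have hWfcard : Wf.card = k := by
      rw [← hWk, Set.ncard_eq_toFinset_card _ hWfin]
    let f : V n → (Wf → Bool) := fun u w =>
      decide (∃ i, (u : Fin n → ZMod 2) i ≠ 0 ∧ ((w : V n) : Fin n → ZMod 2) i ≠ 0)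
    have hinj : Set.InjOn f ((Finset.univ \ Wf : Finset (V n)) : Set (V n)) := by
      intro u hu v hv hfuv
      simp only [Finset.coe_sdiff, Finset.coe_univ, Set.mem_diff, Finset.mem_coe,
        Set.Finite.mem_toFinset] at hu hv
      apply hWres
      intro w hw
      have hwW : w ∈ Wf := hWfin.mem_toFinset.mpr hw
      have hne_u : u ≠ w := fun h => hu.2 (by simpa [Wf, h] using hwW)
      have hne_v : v ≠ w := fun h => hv.2 (by simpa [Wf, h] using hwW)
      have := congrFun hfuv ⟨w, hwW⟩
      simp only [f, decide_eq_decide] at this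
      by_cases hcase : ∃ i, (u : Fin n → ZMod 2) i ≠ 0 ∧ (w : Fin n → ZMod 2) i ≠ 0
      · rw [dist_eq_one hne_u hcase, dist_eq_one hne_v (this.mp hcase)]
      · rw [dist_eq_two hne_u hcase, dist_eq_two hne_v (fun h => hcase (this.mpr h))]
    have hcard := Finset.card_le_card_of_injOn f (fun a _ => Finset.mem_univ (f a)) hinj
    have hcV : Fintype.card (V n) = 2 ^ n - 1 := by
      have : Fintype.card (V n) = Fintype.card (Fin n → ZMod 2) -
          Fintype.card {v : Fin n → ZMod 2 // v = 0} := by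
        exact Fintype.card_subtype_compl _
      rw [this]
      simp [Fintype.card_subtype_eq (0 : Fin n → ZMod 2)]
    have h1 : (Finset.univ \ Wf : Finset (V n)).card = 2 ^ n - 1 - k := by
      rw [Finset.card_sdiff_of_subset (Finset.subset_univ _), Finset.card_univ, hcV, hWfcard]
    have h2 : (Finset.univ : Finset (Wf → Bool)).card = 2 ^ k := by
      simp [hWfcard]
    rw [h1, h2] at hcard
    -- now: 2^n - 1 - k ≤ 2^k, k < n, n ≥ 3 : contradiction
    have hk : k ≤ n - 1 := by omega
    have hpow : 2 ^ k ≤ 2 ^ (n - 1) := Nat.pow_le_pow_right (by norm_num) hk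
    have hbig : n < 2 ^ (n - 1) := lt_two_pow_pred n hn
    have hn2 : 2 ^ (n - 1) + 2 ^ (n - 1) = 2 ^ n := by
      rw [← two_mul, ← pow_succ']
      congr 1
      omega
    omega
  exact le_antisymm (Nat.sInf_le hmem) (le_csInf ⟨n, hmem⟩ hlb)
end

section
/- If q = 2 and n ≥ 3, then the basis {α_1, …, α_n} of V is a resolving set of the non-zero component graph Γ(V). -/
section aux
variable {n : ℕ}

def eVert (i : Fin n) : {v : Fin n → ZMod 2 // v ≠ 0} :=
  ⟨Pi.single i 1, by
    intro h
    have hc := congrFun h i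
    rw [Pi.single_eq_same] at hc
    exact one_ne_zero hc⟩

lemma dist_le_one {u : {v : Fin n → ZMod 2 // v ≠ 0}} {i : Fin n}
    (h : (u : Fin n → ZMod 2) i ≠ 0) : (NZCGraph (ZMod 2) n).dist u (eVert i) ≤ 1 := by
  by_cases he : u = eVert i
  · rw [he, SimpleGraph.dist_self]; omega
  · have hadj : (NZCGraph (ZMod 2) n).Adj u (eVert i) :=
      ⟨he, i, h, by simp [eVert]⟩
    exact le_of_eq (SimpleGraph.dist_eq_one_iff_adj.mpr hadj)

lemma dist_eq_two {u : {v : Fin n → ZMod 2 // v ≠ 0}} {i : Fin n}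
    (h : (u : Fin n → ZMod 2) i = 0) : (NZCGraph (ZMod 2) n).dist u (eVert i) = 2 := by
  obtain ⟨j, hj⟩ : ∃ j, (u : Fin n → ZMod 2) j ≠ 0 := by
    by_contra hc
    push_neg at hc
    exact u.2 (funext hc)
  have hji : j ≠ i := fun hji => hj (hji ▸ h)
  set w : {v : Fin n → ZMod 2 // v ≠ 0} :=
    ⟨Pi.single i 1 + Pi.single j 1, fun hw => by
      have := congrFun hw i
      simp [Pi.single_eq_of_ne hji.symm] at this⟩ with hw
  have hwi : (w : Fin n → ZMod 2) i = 1 := by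
    simp [hw, Pi.single_eq_of_ne hji.symm]
  have hwj : (w : Fin n → ZMod 2) j = 1 := by
    simp [hw, Pi.single_eq_of_ne hji]
  have hune : u ≠ eVert i := by
    intro he
    rw [he] at h
    simp [eVert] at h
  have a1 : (NZCGraph (ZMod 2) n).Adj u w :=
    ⟨fun he => by rw [he] at h; rw [hwi] at h; exact one_ne_zero h,
      j, hj, by rw [hwj]; exact one_ne_zero⟩
  have a2 : (NZCGraph (ZMod 2) n).Adj w (eVert i) :=
    ⟨fun he => by
        have := congrFun (congrArg Subtype.val he) j
        rw [hwj] at this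
        simp [eVert, Pi.single_eq_of_ne hji] at this,
      i, by rw [hwi]; exact one_ne_zero, by simp [eVert]⟩
  have hle : (NZCGraph (ZMod 2) n).dist u (eVert i) ≤ 2 := by
    have h2 := SimpleGraph.dist_le
      (SimpleGraph.Walk.cons a1 (SimpleGraph.Walk.cons a2 SimpleGraph.Walk.nil))
    simpa only [SimpleGraph.Walk.length_cons, SimpleGraph.Walk.length_nil] using h2
  have hreach : (NZCGraph (ZMod 2) n).Reachable u (eVert i) :=
    a1.reachable.trans a2.reachable
  have h0 : (NZCGraph (ZMod 2) n).dist u (eVert i) ≠ 0 := fun h0 =>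
    hune (hreach.dist_eq_zero_iff.mp h0)
  have h1 : (NZCGraph (ZMod 2) n).dist u (eVert i) ≠ 1 := by
    intro h1
    obtain ⟨-, k, hu, hk⟩ := SimpleGraph.dist_eq_one_iff_adj.mp h1
    have : k = i := by
      by_contra hki
      simp [eVert, Pi.single_eq_of_ne hki] at hk
    exact hu (this ▸ h)
  omega

end aux

theorem stmt8 (n : ℕ) (hn : 3 ≤ n) :
    Resolves (NZCGraph (ZMod 2) n)
      {v : {v : Fin n → ZMod 2 // v ≠ 0} |
        ∃ i : Fin n, (v : Fin n → ZMod 2) = Pi.single i 1} := by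
  intro u v h
  apply Subtype.ext
  funext i
  have hd := h (eVert i) ⟨i, rfl⟩
  have key : ((u : Fin n → ZMod 2) i ≠ 0 ↔ (v : Fin n → ZMod 2) i ≠ 0) := by
    constructor
    · intro hu
      by_contra hv
      have := dist_le_one (u := u) hu
      rw [hd, dist_eq_two hv] at this
      omega
    · intro hv
      by_contra hu
      have := dist_le_one (u := v) hv
      rw [← hd, dist_eq_two hu] at this
      omega
  revert key
  generalize (u : Fin n → ZMod 2) i = a
  generalize (v : Fin n → ZMod 2) i = b
  revert a b
  decide
end

section
/- For V a 3-dimensional vector space over the field with 2 elements with basis {α_1, α_2, α_3}, the set {α_1, α_1+α_3, α_3} is a minimum resolving set of Γ(V) but is not a basis of V. -/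
/-! ### Auxiliary material -/

abbrev MyV3 : Type := {v : Fin 3 → ZMod 2 // v ≠ 0}

/-- Computable distance function on the 7-vertex graph. -/
def myDD (u v : MyV3) : ℕ :=
  if u = v then 0 else if ∃ i, (u : Fin 3 → ZMod 2) i ≠ 0 ∧ (v : Fin 3 → ZMod 2) i ≠ 0 then 1 else 2

lemma my_dist_eq (u v : MyV3) : (NZCGraph (ZMod 2) 3).dist u v = myDD u v := by
  unfold myDD
  by_cases h : u = v
  · simp [h]
  · rw [if_neg h]
    by_cases ha : ∃ i, (u : Fin 3 → ZMod 2) i ≠ 0 ∧ (v : Fin 3 → ZMod 2) i ≠ 0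
    · rw [if_pos ha]
      exact SimpleGraph.dist_eq_one_iff_adj.mpr ⟨h, ha⟩
    · rw [if_neg ha]
      have hone : ((fun _ => 1 : Fin 3 → ZMod 2)) ≠ 0 := by decide
      set j : MyV3 := ⟨fun _ => 1, hone⟩ with hjdef
      have hvj : v ≠ j := by
        rintro rfl
        obtain ⟨i, hi⟩ := Function.ne_iff.mp u.2
        exact ha ⟨i, by simpa using hi, one_ne_zero⟩
      have huj : u ≠ j := by
        rintro rfl
        obtain ⟨i, hi⟩ := Function.ne_iff.mp v.2
        exact ha ⟨i, one_ne_zero, by simpa using hi⟩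
      have hadj1 : (NZCGraph (ZMod 2) 3).Adj u j := by
        obtain ⟨i, hi⟩ := Function.ne_iff.mp u.2
        exact ⟨huj, i, by simpa using hi, one_ne_zero⟩
      have hadj2 : (NZCGraph (ZMod 2) 3).Adj j v := by
        obtain ⟨i, hi⟩ := Function.ne_iff.mp v.2
        exact ⟨fun hh => hvj hh.symm, i, one_ne_zero, by simpa using hi⟩
      have hle : (NZCGraph (ZMod 2) 3).dist u v ≤ 2 :=
        SimpleGraph.dist_le (SimpleGraph.Walk.cons hadj1 (SimpleGraph.Walk.cons hadj2 SimpleGraph.Walk.nil))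
      have hpos : 0 < (NZCGraph (ZMod 2) 3).dist u v :=
        SimpleGraph.Reachable.pos_dist_of_ne
          ⟨SimpleGraph.Walk.cons hadj1 (SimpleGraph.Walk.cons hadj2 SimpleGraph.Walk.nil)⟩ h
      have hne1 : (NZCGraph (ZMod 2) 3).dist u v ≠ 1 := by
        intro h1
        exact ha (SimpleGraph.dist_eq_one_iff_adj.mp h1).2
      omega

lemma my_resolves_iff (W : Set MyV3) :
    Resolves (NZCGraph (ZMod 2) 3) W ↔ ∀ u v : MyV3, (∀ w ∈ W, myDD u w = myDD v w) → u = v := by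
  simp only [Resolves, my_dist_eq]

set_option maxRecDepth 100000 in
lemma my_no_small : ∀ F : Finset MyV3, F.card ≤ 2 →
    ¬ (∀ u v : MyV3, (∀ w ∈ F, myDD u w = myDD v w) → u = v) :=
  @of_decide_eq_true _ Fintype.decidableForallFintype (Eq.refl true)

set_option maxRecDepth 100000 in
lemma my_big_resolves : ∀ u v : MyV3,
    (∀ w : MyV3, ((w : Fin 3 → ZMod 2) = Pi.single 0 1 ∨
      (w : Fin 3 → ZMod 2) = Pi.single 0 1 + Pi.single 2 1 ∨
      (w : Fin 3 → ZMod 2) = Pi.single 2 1) → myDD u w = myDD v w) → u = v := by decide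

theorem stmt12 :
    Resolves (NZCGraph (ZMod 2) 3)
      {x : {v : Fin 3 → ZMod 2 // v ≠ 0} |
        (x : Fin 3 → ZMod 2) = Pi.single 0 1 ∨
        (x : Fin 3 → ZMod 2) = Pi.single 0 1 + Pi.single 2 1 ∨
        (x : Fin 3 → ZMod 2) = Pi.single 2 1} ∧
    Set.ncard {x : {v : Fin 3 → ZMod 2 // v ≠ 0} |
        (x : Fin 3 → ZMod 2) = Pi.single 0 1 ∨
        (x : Fin 3 → ZMod 2) = Pi.single 0 1 + Pi.single 2 1 ∨
        (x : Fin 3 → ZMod 2) = Pi.single 2 1} = metricDim (NZCGraph (ZMod 2) 3) ∧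
    ¬ (Submodule.span (ZMod 2)
        ({Pi.single 0 1, Pi.single 0 1 + Pi.single 2 1, Pi.single 2 1} :
          Set (Fin 3 → ZMod 2)) = ⊤ ∧
      LinearIndependent (ZMod 2)
        (fun x : ({Pi.single 0 1, Pi.single 0 1 + Pi.single 2 1, Pi.single 2 1} :
          Set (Fin 3 → ZMod 2)) => (x : Fin 3 → ZMod 2))) := by
  set W₀ : Set MyV3 := {x : MyV3 |
        (x : Fin 3 → ZMod 2) = Pi.single 0 1 ∨
        (x : Fin 3 → ZMod 2) = Pi.single 0 1 + Pi.single 2 1 ∨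
        (x : Fin 3 → ZMod 2) = Pi.single 2 1} with hW₀
  have hres : Resolves (NZCGraph (ZMod 2) 3) W₀ :=
    (my_resolves_iff W₀).mpr (fun u v h => my_big_resolves u v (fun w hw => h w hw))
  have ha1 : (Pi.single 0 1 : Fin 3 → ZMod 2) ≠ 0 := by decide
  have ha2 : (Pi.single 0 1 + Pi.single 2 1 : Fin 3 → ZMod 2) ≠ 0 := by decide
  have ha3 : (Pi.single 2 1 : Fin 3 → ZMod 2) ≠ 0 := by decide
  have hWeq : W₀ = {(⟨_, ha1⟩ : MyV3), ⟨_, ha2⟩, ⟨_, ha3⟩} := by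
    ext x
    simp [hW₀, Set.mem_insert_iff, Subtype.ext_iff]
  have hcard : W₀.ncard = 3 := by
    rw [hWeq]
    rw [Set.ncard_insert_of_notMem (by simp [Subtype.ext_iff]; decide),
      Set.ncard_pair (by simp [Subtype.ext_iff])]
  have hdim : metricDim (NZCGraph (ZMod 2) 3) = 3 := by
    have h3 : 3 ∈ {k | ∃ W : Set MyV3, W.ncard = k ∧ Resolves (NZCGraph (ZMod 2) 3) W} :=
      ⟨W₀, hcard, hres⟩
    refine le_antisymm (Nat.sInf_le h3) (le_csInf ⟨3, h3⟩ ?_)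
    rintro k ⟨W, rfl, hresW⟩
    by_contra hlt
    push_neg at hlt
    have hWf : W.Finite := Set.toFinite W
    have hc : hWf.toFinset.card ≤ 2 := by
      rw [← Set.ncard_eq_toFinset_card W hWf]; omega
    exact my_no_small hWf.toFinset hc
      (fun u v h => (my_resolves_iff W).mp hresW u v
        (fun w hw => h w (hWf.mem_toFinset.mpr hw)))
  refine ⟨hres, by rw [hdim]; exact hcard, ?_⟩
  rintro ⟨-, hli⟩
  set S : Set (Fin 3 → ZMod 2) :=
    {Pi.single 0 1, Pi.single 0 1 + Pi.single 2 1, Pi.single 2 1} with hS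
  have hm1 : (Pi.single 0 1 : Fin 3 → ZMod 2) ∈ S := by simp [hS]
  have hm2 : (Pi.single 0 1 + Pi.single 2 1 : Fin 3 → ZMod 2) ∈ S := by simp [hS]
  have hm3 : (Pi.single 2 1 : Fin 3 → ZMod 2) ∈ S := by simp [hS]
  have hnm := hli.notMem_span_image (s := {(⟨_, hm1⟩ : S), ⟨_, hm3⟩}) (x := ⟨_, hm2⟩)
    (by
      simp only [Set.mem_insert_iff, Set.mem_singleton_iff, Subtype.ext_iff]
      push_neg
      constructor <;> decide)
  apply hnm
  have h1 : (Pi.single 0 1 : Fin 3 → ZMod 2) ∈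
      (fun x : S => (x : Fin 3 → ZMod 2)) '' {(⟨_, hm1⟩ : S), ⟨_, hm3⟩} :=
    ⟨⟨_, hm1⟩, by simp⟩
  have h3 : (Pi.single 2 1 : Fin 3 → ZMod 2) ∈
      (fun x : S => (x : Fin 3 → ZMod 2)) '' {(⟨_, hm1⟩ : S), ⟨_, hm3⟩} :=
    ⟨⟨_, hm3⟩, by simp⟩
  exact Submodule.add_mem _ (Submodule.subset_span h1) (Submodule.subset_span h3)
end

section
/- For q = 2 and n ≥ 3, the set V_{n−1} = {v ∈ V \ {0} : α_{n−1} ∉ S_v} is a minimal resolving set of the non-zero component graph Γ(V). -/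
private lemma zmod2_eq_one {a : ZMod 2} (h : a ≠ 0) : a = 1 := by revert h; revert a; decide

private lemma nzc_dist_two {n : ℕ} (hn : 1 ≤ n) {u v : {v : Fin n → ZMod 2 // v ≠ 0}}
    (huv : u ≠ v) (hadj : ¬ (NZCGraph (ZMod 2) n).Adj u v) :
    (NZCGraph (ZMod 2) n).dist u v = 2 := by
  set G := NZCGraph (ZMod 2) n with hG
  have hz : (fun _ : Fin n => (1 : ZMod 2)) ≠ 0 := by
    intro h; have := congrFun h ⟨0, hn⟩; simp at this
  set z : {v : Fin n → ZMod 2 // v ≠ 0} := ⟨fun _ => 1, hz⟩ with hzdef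
  obtain ⟨i, hi⟩ := Function.ne_iff.mp u.2
  obtain ⟨i', hi'⟩ := Function.ne_iff.mp v.2
  simp only [Pi.zero_apply] at hi hi'
  have huz : u ≠ z := by
    rintro rfl
    exact hadj ⟨huv, i', one_ne_zero, hi'⟩
  have hvz : z ≠ v := by
    rintro rfl
    exact hadj ⟨huv, i, hi, one_ne_zero⟩
  have h1 : G.Adj u z := ⟨huz, i, hi, one_ne_zero⟩
  have h2 : G.Adj z v := ⟨hvz, i', one_ne_zero, hi'⟩
  have hle : G.dist u v ≤ 2 := by
    have := G.dist_le (SimpleGraph.Walk.cons h1 (SimpleGraph.Walk.cons h2 SimpleGraph.Walk.nil))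
    simpa using this
  have h0 : G.dist u v ≠ 0 := by
    rw [SimpleGraph.dist_ne_zero_iff_ne_and_reachable]
    exact ⟨huv, ⟨SimpleGraph.Walk.cons h1 (SimpleGraph.Walk.cons h2 SimpleGraph.Walk.nil)⟩⟩
  have hone : G.dist u v ≠ 1 := fun h => hadj (SimpleGraph.dist_eq_one_iff_adj.mp h)
  omega

theorem stmt14 (n : ℕ) (hn : 3 ≤ n) :
    MinimalResolves (NZCGraph (ZMod 2) n)
      {v : {v : Fin n → ZMod 2 // v ≠ 0} |
        (v : Fin n → ZMod 2) ⟨n - 2, by omega⟩ = 0} := by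
  have hn1 : 1 ≤ n := by omega
  set G := NZCGraph (ZMod 2) n with hG
  set i₀ : Fin n := ⟨n - 2, by omega⟩ with hi₀
  set W : Set {v : Fin n → ZMod 2 // v ≠ 0} :=
    {v | (v : Fin n → ZMod 2) i₀ = 0} with hW
  constructor
  · -- Resolves
    intro u v h
    by_contra huv
    -- neither u nor v lies in W
    have hnotW : ∀ a b : {v : Fin n → ZMod 2 // v ≠ 0}, a ≠ b →
        (∀ w ∈ W, G.dist a w = G.dist b w) → (a : Fin n → ZMod 2) i₀ ≠ 0 := by
      intro a b hab hd ha
      have hmem : a ∈ W := ha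
      have := hd a hmem
      rw [SimpleGraph.dist_self] at this
      by_cases hadj : G.Adj b a
      · rw [SimpleGraph.dist_eq_one_iff_adj.mpr hadj] at this; omega
      · rw [nzc_dist_two hn1 (Ne.symm hab) hadj] at this; omega
    have hu0 : (u : Fin n → ZMod 2) i₀ ≠ 0 := hnotW u v huv h
    have hv0 : (v : Fin n → ZMod 2) i₀ ≠ 0 :=
      hnotW v u (Ne.symm huv) (fun w hw => (h w hw).symm)
    obtain ⟨j, hj⟩ : ∃ j, (u : Fin n → ZMod 2) j ≠ (v : Fin n → ZMod 2) j :=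
      Function.ne_iff.mp (fun hh => huv (Subtype.ext hh))
    have hji : j ≠ i₀ := by
      intro hh; rw [hh, zmod2_eq_one hu0, zmod2_eq_one hv0] at hj; exact hj rfl
    -- the basis vector e_j
    have hez : (fun i : Fin n => if i = j then (1 : ZMod 2) else 0) ≠ 0 := by
      intro hh; have := congrFun hh j; simp at this
    set e : {v : Fin n → ZMod 2 // v ≠ 0} := ⟨fun i => if i = j then 1 else 0, hez⟩
      with he
    have heW : e ∈ W := by
      show (e : Fin n → ZMod 2) i₀ = 0
      simp [he, (Ne.symm hji)]
    have hkey := h e heW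
    -- one of u, v vanishes at j, the other does not
    have main : ∀ a b : {v : Fin n → ZMod 2 // v ≠ 0},
        (a : Fin n → ZMod 2) i₀ ≠ 0 → (a : Fin n → ZMod 2) j = 0 →
        (b : Fin n → ZMod 2) j ≠ 0 → G.dist a e = G.dist b e → False := by
      intro a b hai haj hbj hd
      have hae : a ≠ e := by
        intro hh
        apply hai; rw [hh]
        show (if i₀ = j then (1 : ZMod 2) else 0) = 0
        simp [Ne.symm hji]
      have hadj_a : ¬ G.Adj a e := by
        rintro ⟨-, i, hai', hei⟩
        have : i = j := by
          by_contra hij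
          exact hei (by simp [he, hij])
        rw [this, haj] at hai'; exact hai' rfl
      by_cases hbe : b = e
      · rw [hbe, SimpleGraph.dist_self, nzc_dist_two hn1 hae hadj_a] at hd
        omega
      · have hadj_b : G.Adj b e := ⟨hbe, j, hbj, by simp [he]⟩
        rw [nzc_dist_two hn1 hae hadj_a, SimpleGraph.dist_eq_one_iff_adj.mpr hadj_b] at hd
        omega
    by_cases huj : (u : Fin n → ZMod 2) j = 0
    · exact main u v hu0 huj (fun hh => hj (by rw [huj, hh])) hkey
    · have hvj : (v : Fin n → ZMod 2) j = 0 := by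
        rw [zmod2_eq_one huj] at hj
        rcases (by decide : ∀ a : ZMod 2, a = 0 ∨ a = 1) ((v : Fin n → ZMod 2) j) with hh | hh
        · exact hh
        · exact absurd hh.symm hj
      exact main v u hv0 hvj huj hkey.symm
  · -- minimality
    intro W' hW' hres
    obtain ⟨w₀, hw₀W, hw₀'⟩ := Set.exists_of_ssubset hW'
    have hw₀i : (w₀ : Fin n → ZMod 2) i₀ = 0 := hw₀W
    have hvz : (fun i : Fin n => if i = i₀ then (1 : ZMod 2) else (w₀ : Fin n → ZMod 2) i)
        ≠ 0 := by
      intro hh; have := congrFun hh i₀; simp at this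
    set v : {v : Fin n → ZMod 2 // v ≠ 0} :=
      ⟨fun i => if i = i₀ then 1 else (w₀ : Fin n → ZMod 2) i, hvz⟩ with hv
    have hne : w₀ ≠ v := by
      intro hh
      have := congrFun (congrArg Subtype.val hh) i₀
      rw [hw₀i] at this; simp [hv] at this
    apply hne
    apply hres
    intro w hw
    have hwW : w ∈ W := hW'.subset hw
    have hwi : (w : Fin n → ZMod 2) i₀ = 0 := hwW
    have h1 : w₀ ≠ w := by rintro rfl; exact hw₀' hw
    have h2 : v ≠ w := by
      intro hh
      have := congrFun (congrArg Subtype.val hh) i₀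
      rw [hwi] at this; simp [hv] at this
    have hadj : G.Adj w₀ w ↔ G.Adj v w := by
      constructor
      · rintro ⟨-, i, hi1, hi2⟩
        have hii : i ≠ i₀ := by rintro rfl; exact hi2 hwi
        exact ⟨h2, i, by simp [hv, hii]; exact hi1, hi2⟩
      · rintro ⟨-, i, hi1, hi2⟩
        have hii : i ≠ i₀ := by rintro rfl; exact hi2 hwi
        refine ⟨h1, i, ?_, hi2⟩
        simpa [hv, hii] using hi1
    by_cases hA : G.Adj w₀ w
    · rw [SimpleGraph.dist_eq_one_iff_adj.mpr hA,
        SimpleGraph.dist_eq_one_iff_adj.mpr (hadj.mp hA)]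
    · rw [nzc_dist_two hn1 h1 hA, nzc_dist_two hn1 h2 (fun hh => hA (hadj.mpr hh))]
end

section
/- If q ≥ 3, then the exchange property for minimal resolving sets holds in the non-zero component graph Γ(V): for any two minimal resolving sets W_1, W_2 and any u_1 ∈ W_1, there exists u_2 ∈ W_2 such that (W_1 \ {u_1}) ∪ {u_2} is a minimal resolving set. -/
section NZCAux

variable {F : Type*} [Field F] {n : ℕ}

/-- same support -/
def EqSupp (u v : {v : Fin n → F // v ≠ 0}) : Prop := ∀ i, (u.1 i = 0 ↔ v.1 i = 0)

lemma EqSupp.refl (u : {v : Fin n → F // v ≠ 0}) : EqSupp u u := fun _ => Iff.rfl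
lemma EqSupp.symm {u v : {v : Fin n → F // v ≠ 0}} (h : EqSupp u v) : EqSupp v u :=
  fun i => (h i).symm
lemma EqSupp.trans {u v w : {v : Fin n → F // v ≠ 0}} (h : EqSupp u v) (h' : EqSupp v w) :
    EqSupp u w := fun i => (h i).trans (h' i)

lemma nzc_adj_iff {u v : {v : Fin n → F // v ≠ 0}} :
    (NZCGraph F n).Adj u v ↔ u ≠ v ∧ ∃ i, u.1 i ≠ 0 ∧ v.1 i ≠ 0 := Iff.rfl

lemma nzc_dist_eq_two {u v : {v : Fin n → F // v ≠ 0}} (hne : u ≠ v)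
    (hd : ¬ ∃ i, u.1 i ≠ 0 ∧ v.1 i ≠ 0) : (NZCGraph F n).dist u v = 2 := by
  push_neg at hd
  -- the midpoint u + v
  obtain ⟨i, hi⟩ : ∃ i, u.1 i ≠ 0 := by
    by_contra h; push_neg at h; exact u.2 (funext fun i => h i)
  obtain ⟨j, hj⟩ : ∃ j, v.1 j ≠ 0 := by
    by_contra h; push_neg at h; exact v.2 (funext fun j => h j)
  have hwi : (u.1 + v.1) i ≠ 0 := by
    have : v.1 i = 0 := by by_contra h; exact h (hd i hi)
    simpa [this] using hi
  have hwj : (u.1 + v.1) j ≠ 0 := by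
    have : u.1 j = 0 := by by_contra h; exact hj (hd j h)
    simpa [this] using hj
  set w : {v : Fin n → F // v ≠ 0} := ⟨u.1 + v.1, fun h => hwi (by rw [h]; rfl)⟩ with hw
  have haw : (NZCGraph F n).Adj u w := by
    refine ⟨?_, i, hi, hwi⟩
    intro h
    have : v.1 = 0 := by
      have h2 := congrArg Subtype.val h
      simp only [hw] at h2
      funext k
      have h3 := congrFun h2 k
      simp only [Pi.add_apply] at h3
      exact (left_eq_add.mp h3)
    exact v.2 this
  have hwv : (NZCGraph F n).Adj w v := by
    refine ⟨?_, j, hwj, hj⟩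
    intro h
    have : u.1 = 0 := by
      have h2 := congrArg Subtype.val h
      simp only [hw] at h2
      funext k
      have h3 := congrFun h2 k
      simp only [Pi.add_apply] at h3
      exact (add_eq_right.mp h3)
    exact u.2 this
  have hle : (NZCGraph F n).dist u v ≤ 2 := by
    have := SimpleGraph.dist_le ((haw.toWalk.append hwv.toWalk))
    simpa using this
  have hreach : (NZCGraph F n).Reachable u v := ⟨haw.toWalk.append hwv.toWalk⟩
  have h0 : (NZCGraph F n).dist u v ≠ 0 := by
    rw [SimpleGraph.dist_ne_zero_iff_ne_and_reachable]; exact ⟨hne, hreach⟩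
  have h1 : (NZCGraph F n).dist u v ≠ 1 := by
    intro h
    obtain ⟨-, k, hk1, hk2⟩ := SimpleGraph.dist_eq_one_iff_adj.mp h
    exact hk2 (hd k hk1)
  omega

lemma nzc_dist_cases (u w : {v : Fin n → F // v ≠ 0}) (hne : u ≠ w) :
    ((∃ i, u.1 i ≠ 0 ∧ w.1 i ≠ 0) ∧ (NZCGraph F n).dist u w = 1) ∨
    ((¬ ∃ i, u.1 i ≠ 0 ∧ w.1 i ≠ 0) ∧ (NZCGraph F n).dist u w = 2) := by
  by_cases h : ∃ i, u.1 i ≠ 0 ∧ w.1 i ≠ 0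
  · exact Or.inl ⟨h, SimpleGraph.dist_eq_one_iff_adj.2 ⟨hne, h⟩⟩
  · exact Or.inr ⟨h, nzc_dist_eq_two hne h⟩

lemma nzc_dist_self (u : {v : Fin n → F // v ≠ 0}) : (NZCGraph F n).dist u u = 0 := by
  simp

/-- key: a singleton-support vertex in W for each index,當 class condition holds -/
lemma exists_singleton_supp [Fintype F] (h3 : 3 ≤ Fintype.card F) (W : Set {v : Fin n → F // v ≠ 0})
    (hc : ∀ u v : {v : Fin n → F // v ≠ 0}, u ∉ W → v ∉ W → EqSupp u v → u = v)
    (i : Fin n) : ∃ w ∈ W, ∀ j, w.1 j ≠ 0 ↔ j = i := by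
  classical
  obtain ⟨a, ha0, ha1⟩ : ∃ a : F, a ≠ 0 ∧ a ≠ 1 := by
    have hns : (Finset.univ \ ({0, 1} : Finset F)).Nonempty := by
      rw [Finset.sdiff_nonempty]
      intro hsub
      have hc := Finset.card_le_card hsub
      have h2 : ({0, 1} : Finset F).card ≤ 2 := Finset.card_insert_le _ _ |>.trans (by simp)
      simp [Finset.card_univ] at hc
      omega
    obtain ⟨a, ha⟩ := hns
    simp [Finset.mem_sdiff] at ha
    exact ⟨a, ha.1, ha.2⟩
  set w1 : {v : Fin n → F // v ≠ 0} := ⟨Pi.single i (1:F), by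
    intro h; have := congrFun h i; simpa using this⟩
  set wa : {v : Fin n → F // v ≠ 0} := ⟨Pi.single i a, by
    intro h; have := congrFun h i; simp [Pi.single_apply] at this; exact ha0 this⟩
  have hsupp1 : ∀ j, w1.1 j ≠ 0 ↔ j = i := by
    intro j; simp only [w1, Pi.single_apply]
    by_cases h : j = i <;> simp [h]
  have hsuppa : ∀ j, wa.1 j ≠ 0 ↔ j = i := by
    intro j; simp only [wa, Pi.single_apply]
    by_cases h : j = i <;> simp [h, ha0]
  have hne : w1 ≠ wa := by
    intro h
    have := congrFun (congrArg Subtype.val h) i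
    simp [w1, wa, Pi.single_apply] at this
    exact ha1 this.symm
  have heq : EqSupp w1 wa := by
    intro j
    constructor
    · intro h
      by_contra h'
      exact ((hsupp1 j).2 ((hsuppa j).1 h')) h
    · intro h
      by_contra h'
      exact ((hsuppa j).2 ((hsupp1 j).1 h')) h
  by_cases h1 : w1 ∈ W
  · exact ⟨w1, h1, hsupp1⟩
  by_cases h2 : wa ∈ W
  · exact ⟨wa, h2, hsuppa⟩
  exact absurd (hc _ _ h1 h2 heq) hne

end NZCAux

section NZCChar

variable {F : Type*} [Field F] [Fintype F] {n : ℕ}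

lemma nzc_resolves_iff (h3 : 3 ≤ Fintype.card F) (W : Set {v : Fin n → F // v ≠ 0}) :
    Resolves (NZCGraph F n) W ↔
      ∀ u v : {v : Fin n → F // v ≠ 0}, u ∉ W → v ∉ W → EqSupp u v → u = v := by
  constructor
  · intro hres u v hu hv hsupp
    apply hres
    intro w hw
    have huw : u ≠ w := fun h => hu (h ▸ hw)
    have hvw : v ≠ w := fun h => hv (h ▸ hw)
    have hiff : (∃ i, u.1 i ≠ 0 ∧ w.1 i ≠ 0) ↔ (∃ i, v.1 i ≠ 0 ∧ w.1 i ≠ 0) := by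
      constructor
      · rintro ⟨i, hui, hwi⟩
        exact ⟨i, fun h => hui ((hsupp i).2 h), hwi⟩
      · rintro ⟨i, hvi, hwi⟩
        exact ⟨i, fun h => hvi ((hsupp i).1 h), hwi⟩
    rcases nzc_dist_cases u w huw with ⟨ha, hd⟩ | ⟨ha, hd⟩ <;>
      rcases nzc_dist_cases v w hvw with ⟨hb, he⟩ | ⟨hb, he⟩ <;>
        first
          | (exact absurd (hiff.1 ha) hb)
          | (exact absurd (hiff.2 hb) ha)
          | (rw [hd, he])
  · intro hc u v hall
    by_contra hne
    by_cases hu : u ∈ W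
    · have h0 := hall u hu
      rw [nzc_dist_self] at h0
      rcases nzc_dist_cases v u (Ne.symm hne) with ⟨-, hd⟩ | ⟨-, hd⟩ <;> omega
    by_cases hv : v ∈ W
    · have h0 := hall v hv
      rw [nzc_dist_self] at h0
      rcases nzc_dist_cases u v hne with ⟨-, hd⟩ | ⟨-, hd⟩ <;> omega
    by_cases hsupp : EqSupp u v
    · exact hne (hc u v hu hv hsupp)
    · rw [EqSupp] at hsupp
      push_neg at hsupp
      obtain ⟨i, hi⟩ := hsupp
      -- wlog-ish: handle both directions
      have key : ∀ x y : {v : Fin n → F // v ≠ 0}, x ∉ W → y ∉ W →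
          x.1 i ≠ 0 → y.1 i = 0 → (∀ w ∈ W, (NZCGraph F n).dist x w = (NZCGraph F n).dist y w)
            → False := by
        intro x y hx hy hxi hyi hall'
        obtain ⟨w, hwW, hw⟩ := exists_singleton_supp h3 W hc i
        have hxw : x ≠ w := fun h => hx (h ▸ hwW)
        have hyw : y ≠ w := fun h => hy (h ▸ hwW)
        have hd1 : (NZCGraph F n).dist x w = 1 :=
          SimpleGraph.dist_eq_one_iff_adj.2 ⟨hxw, i, hxi, (hw i).2 rfl⟩
        have hd2 : (NZCGraph F n).dist y w = 2 := by
          apply nzc_dist_eq_two hyw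
          rintro ⟨j, hyj, hwj⟩
          exact hyj ((hw j).1 hwj ▸ hyi)
        rw [hall' w hwW, hd2] at hd1
        omega
      rcases hi with ⟨hui, hvi⟩ | ⟨hui, hvi⟩
      · exact key v u hv hu hvi hui (fun w hw => (hall w hw).symm)
      · exact key u v hu hv hui hvi hall

lemma nzc_minimal_iff (h3 : 3 ≤ Fintype.card F) (W : Set {v : Fin n → F // v ≠ 0}) :
    MinimalResolves (NZCGraph F n) W ↔
      (∀ u v : {v : Fin n → F // v ≠ 0}, u ∉ W → v ∉ W → EqSupp u v → u = v) ∧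
      (∀ w ∈ W, ∃ m, m ∉ W ∧ EqSupp m w) := by
  constructor
  · rintro ⟨hres, hmin⟩
    have hc := (nzc_resolves_iff h3 W).1 hres
    refine ⟨hc, fun w hw => ?_⟩
    have hss : W \ {w} ⊂ W := Set.diff_singleton_ssubset.2 hw
    have hnres := hmin _ hss
    rw [nzc_resolves_iff h3] at hnres
    push_neg at hnres
    obtain ⟨u, v, hu, hv, heq, hne⟩ := hnres
    by_cases huW : u ∈ W
    · have huw : u = w := by
        by_contra h
        exact hu ⟨huW, h⟩
      have hvW : v ∉ W := by
        intro hvW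
        have : v = w := by by_contra h; exact hv ⟨hvW, h⟩
        exact hne (huw.trans this.symm)
      exact ⟨v, hvW, huw ▸ heq.symm⟩
    · by_cases hvW : v ∈ W
      · have hvw : v = w := by by_contra h; exact hv ⟨hvW, h⟩
        exact ⟨u, huW, hvw ▸ heq⟩
      · exact absurd (hc u v huW hvW heq) hne
  · rintro ⟨hc, hm⟩
    refine ⟨(nzc_resolves_iff h3 W).2 hc, fun W' hss hres' => ?_⟩
    obtain ⟨w, hwW, hwW'⟩ := Set.exists_of_ssubset hss
    obtain ⟨m, hmW, hmeq⟩ := hm w hwW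
    have hmW' : m ∉ W' := fun h => hmW (hss.1 h)
    have := (nzc_resolves_iff h3 W').1 hres' m w hmW' hwW' hmeq
    exact hmW (this ▸ hwW)

end NZCChar


theorem stmt18 (q n : ℕ) (F : Type*) [Field F] [Fintype F] (hq : Fintype.card F = q)
    (h3 : 3 ≤ q) (W₁ W₂ : Set {v : Fin n → F // v ≠ 0})
    (h₁ : MinimalResolves (NZCGraph F n) W₁) (h₂ : MinimalResolves (NZCGraph F n) W₂)
    (u₁ : {v : Fin n → F // v ≠ 0}) (hu₁ : u₁ ∈ W₁) :
    ∃ u₂ ∈ W₂, MinimalResolves (NZCGraph F n) (insert u₂ (W₁ \ {u₁})) := by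
  have h3F : 3 ≤ Fintype.card F := by omega
  obtain ⟨hc1, hm1⟩ := (nzc_minimal_iff h3F W₁).1 h₁
  obtain ⟨hc2, hm2⟩ := (nzc_minimal_iff h3F W₂).1 h₂
  obtain ⟨m, hmW₁, hmeq⟩ := hm1 u₁ hu₁
  have hmne : m ≠ u₁ := fun h => hmW₁ (h ▸ hu₁)
  obtain ⟨u₂, hu₂W₂, hcase⟩ : ∃ u₂ ∈ W₂, u₂ = u₁ ∨ u₂ = m := by
    by_cases h : u₁ ∈ W₂
    · exact ⟨u₁, h, Or.inl rfl⟩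
    · by_cases h' : m ∈ W₂
      · exact ⟨m, h', Or.inr rfl⟩
      · exact absurd (hc2 m u₁ h' h hmeq) hmne
  have hmemW : ∀ x : {v : Fin n → F // v ≠ 0},
      x ∈ insert u₂ (W₁ \ {u₁}) ↔ x = u₂ ∨ (x ∈ W₁ ∧ x ≠ u₁) := by
    intro x; simp [Set.mem_insert_iff, Set.mem_diff]
  have hequ₂ : EqSupp u₂ u₁ := by
    rcases hcase with rfl | rfl
    · exact EqSupp.refl _
    · exact hmeq
  have hu₁notW : u₂ = m → u₁ ∉ insert u₂ (W₁ \ {u₁}) := by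
    intro h hmem
    rcases (hmemW u₁).1 hmem with h' | ⟨-, h'⟩
    · exact hmne (h ▸ h'.symm)
    · exact h' rfl
  have hmnotW : m ∉ W₁ \ {u₁} := fun h => hmW₁ h.1
  refine ⟨u₂, hu₂W₂, (nzc_minimal_iff h3F _).2 ⟨?_, ?_⟩⟩
  · -- class condition
    intro x y hx hy heq
    rw [hmemW] at hx hy
    push_neg at hx hy
    obtain ⟨hxu₂, hx'⟩ := hx
    obtain ⟨hyu₂, hy'⟩ := hy
    by_cases hxW₁ : x ∈ W₁
    · have hxu₁ : x = u₁ := hx' hxW₁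
      by_cases hyW₁ : y ∈ W₁
      · exact hxu₁.trans (hy' hyW₁).symm
      · -- y ∉ W₁, x = u₁: y = m, but then y = u₂ or u₂ = u₁ both contradict
        have hym : y = m := (hc1 m y hmW₁ hyW₁ (hmeq.trans (hxu₁ ▸ heq))).symm
        rcases hcase with h | h
        · exact absurd (hxu₁.trans h.symm) hxu₂
        · exact absurd (hym.trans h.symm) hyu₂
    · by_cases hyW₁ : y ∈ W₁
      · have hyu₁ : y = u₁ := hy' hyW₁
        have hxm : x = m := (hc1 m x hmW₁ hxW₁ (hmeq.trans (hyu₁ ▸ heq.symm))).symm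
        rcases hcase with h | h
        · exact absurd (hyu₁.trans h.symm) hyu₂
        · exact absurd (hxm.trans h.symm) hxu₂
      · exact hc1 x y hxW₁ hyW₁ heq
  · -- each member has a missing twin
    intro w hw
    rcases (hmemW w).1 hw with rfl | ⟨hwW₁, hwu₁⟩
    · rcases hcase with h | h
      · refine ⟨m, ?_, h ▸ hmeq⟩
        rw [hmemW]; push_neg
        exact ⟨h ▸ hmne, fun hh => absurd hh hmW₁⟩
      · exact ⟨u₁, hu₁notW h, h ▸ hmeq.symm⟩
    · obtain ⟨mw, hmwW₁, hmweq⟩ := hm1 w hwW₁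
      by_cases hmwu₂ : mw = u₂
      · have hu₂u₁ : u₂ ≠ u₁ := fun h => (h ▸ hmwu₂ ▸ hmwW₁) hu₁
        have hu₂m : u₂ = m := hcase.resolve_left hu₂u₁
        refine ⟨u₁, hu₁notW hu₂m, ?_⟩
        exact hmeq.symm.trans (hu₂m ▸ hmwu₂ ▸ hmweq)
      · refine ⟨mw, ?_, hmweq⟩
        rw [hmemW]; push_neg
        exact ⟨hmwu₂, fun hh => absurd hh hmwW₁⟩
end
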